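/- Let b > 0 and Z ~ Laplace(0,b), and let g be the unbiased estimator of 1/q described above (using a polynomial extension below L = 1). Then for each q ≥ 1 and each k ∈ ℕ, E[|g(q+Z)|^k] < ∞, whereas E[|1/(q+Z)|] = ∞. -/

import Mathlib

open MeasureTheory Real

/-- Density of the Laplace(0,b) distribution. -/
noncomputable def laplacePDF (b x : ℝ) : ℝ := (1 / (2 * b)) * Real.exp (-|x| / b)

/-- The extended function `f̃` (equal to `1/x` on `[1,∞)`, quadratic below 1). -/
noncomputable def fTilde (x : ℝ) : ℝ :=
  if 1 ≤ x then 1 / x else 1 - (x - 1) + (x - 1) ^ 2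

/-- Second derivative of `f̃`. -/
noncomputable def fTilde'' (x : ℝ) : ℝ := if 1 ≤ x then 2 / x ^ 3 else 2

/-- The unbiased estimator `g` of `1/q` (via the polynomial extension below `L = 1`). -/
noncomputable def invEstimator (b x : ℝ) : ℝ := fTilde x - b ^ 2 * fTilde'' x

lemma continuous_fTilde : Continuous fTilde := by
  unfold fTilde
  apply continuous_if_le continuous_const continuous_id
  · apply ContinuousOn.div continuousOn_const continuousOn_id
    intro x hx
    have : (1:ℝ) ≤ x := hx
    positivity
  · fun_prop
  · intro x hx; simp only [id_eq] at hx; rw [← hx]; norm_num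

lemma continuous_fTilde'' : Continuous fTilde'' := by
  unfold fTilde''
  apply continuous_if_le continuous_const continuous_id
  · apply ContinuousOn.div continuousOn_const (by fun_prop)
    intro x hx
    have : (1:ℝ) ≤ x := hx
    positivity
  · fun_prop
  · intro x hx; simp only [id_eq] at hx; rw [← hx]; norm_num

lemma continuous_invEstimator (b : ℝ) : Continuous (invEstimator b) :=
  continuous_fTilde.sub (continuous_const.mul continuous_fTilde'')

lemma abs_invEstimator_le (b x : ℝ) :
    |invEstimator b x| ≤ (3 + 2 * b ^ 2) * (1 + |x|) ^ 2 := by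
  have hx : 0 ≤ |x| := abs_nonneg x
  have h1 : |fTilde x| ≤ 3 * (1 + |x|) ^ 2 := by
    unfold fTilde
    split_ifs with h
    · have hx0 : 0 < x := lt_of_lt_of_le one_pos h
      rw [abs_of_nonneg (by positivity)]
      have : 1 / x ≤ 1 := by
        rw [div_le_one hx0]; exact h
      nlinarith
    · have := abs_abs x
      calc |1 - (x - 1) + (x - 1) ^ 2| ≤ 1 + |x - 1| + (x-1)^2 := by
            refine (abs_add_le _ _).trans ?_
            gcongr
            · refine (abs_sub _ _).trans ?_; simp
            · rw [abs_pow, sq_abs]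
        _ ≤ 3 * (1 + |x|) ^ 2 := by
            have h2 : |x - 1| ≤ |x| + 1 := by
              refine (abs_sub _ _).trans ?_; simp
            have h3 : (x - 1)^2 = |x - 1|^2 := (sq_abs _).symm
            nlinarith [abs_nonneg (x - 1)]
  have h2 : |fTilde'' x| ≤ 2 := by
    unfold fTilde''
    split_ifs with h
    · have hx0 : 0 < x := lt_of_lt_of_le one_pos h
      rw [abs_of_nonneg (by positivity)]
      rw [div_le_iff₀ (by positivity)]
      have h3 : (1:ℝ) ≤ x ^ 3 := by
        nlinarith [mul_nonneg (sub_nonneg.mpr h) (by positivity : (0:ℝ) ≤ x^2 + x + 1)]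
      linarith
    · simp
  have h4 : (1:ℝ) ≤ (1 + |x|) ^ 2 := by nlinarith
  calc |invEstimator b x| ≤ |fTilde x| + |b^2 * fTilde'' x| := abs_sub _ _
    _ ≤ 3 * (1 + |x|)^2 + b^2 * 2 := by
        rw [abs_mul, abs_of_nonneg (sq_nonneg b)]
        gcongr
    _ ≤ (3 + 2 * b ^ 2) * (1 + |x|) ^ 2 := by nlinarith [sq_nonneg b]

lemma tendsto_aux (A : ℝ) (m : ℕ) {c : ℝ} (hc : 0 < c) :
    Filter.Tendsto (fun z : ℝ => (A + z) ^ m * Real.exp (-(c * z)))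
      Filter.atTop (nhds 0) := by
  have h0 : Filter.Tendsto (fun t : ℝ => t ^ m * Real.exp (-t)) Filter.atTop (nhds 0) :=
    Real.tendsto_pow_mul_exp_neg_atTop_nhds_zero m
  have hcomp : Filter.Tendsto (fun z : ℝ => c * (A + z)) Filter.atTop Filter.atTop := by
    apply Filter.Tendsto.const_mul_atTop hc
    exact Filter.tendsto_atTop_add_const_left _ _ Filter.tendsto_id
  have h1 := (h0.comp hcomp).const_mul (Real.exp (c * A) / c ^ m)
  rw [mul_zero] at h1
  refine h1.congr (fun z => ?_)
  have hcm : (c : ℝ) ^ m ≠ 0 := by positivity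
  simp only [Function.comp]
  rw [mul_pow, Real.exp_neg, Real.exp_neg]
  rw [mul_add c A z, Real.exp_add]
  field_simp

lemma exp_integrableOn_Iic (a : ℝ) {c : ℝ} (hc : 0 < c) :
    IntegrableOn (fun x : ℝ => Real.exp (c * x)) (Set.Iic a) := by
  rw [← (Measure.measurePreserving_neg (volume : Measure ℝ)).integrableOn_comp_preimage
      (Homeomorph.neg ℝ).measurableEmbedding]
  simp only [Function.comp_def, Set.neg_preimage, Set.neg_Iic]
  rw [integrableOn_Ici_iff_integrableOn_Ioi]
  exact (exp_neg_integrableOn_Ioi (-a) hc).congr_fun (fun x _ => by ring_nf) measurableSet_Ioi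

/-- All moments of the unbiased estimator of `1/q` are finite under Laplace(0,b)
noise, whereas the plug-in estimator `1/(q+Z)` has an infinite first absolute moment. -/
theorem invEstimator_moments_finite_plugin_infinite (b : ℝ) (hb : 0 < b) :
    ∀ q : ℝ, 1 ≤ q →
      (∀ k : ℕ, Integrable (fun z : ℝ => |invEstimator b (q + z)| ^ k * laplacePDF b z)) ∧
      ¬ Integrable (fun z : ℝ => |1 / (q + z)| * laplacePDF b z) := by
  intro q hq
  constructor
  · intro k
    set c : ℝ := 1 / (2 * b) with hc_def
    have hc : 0 < c := by positivity
    set M : ℝ := 3 + 2 * b ^ 2 with hM_def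
    have hM : 0 < M := by positivity
    set A : ℝ := 1 + q with hA_def
    set D : ℝ := M ^ k * (1 / (2 * b)) with hD_def
    have hD : 0 < D := by positivity
    set f : ℝ → ℝ := fun z => |invEstimator b (q + z)| ^ k * laplacePDF b z with hf_def
    have hf_cont : Continuous f := by
      apply Continuous.mul
      · exact (((continuous_invEstimator b).comp (continuous_const.add continuous_id)).abs).pow k
      · unfold laplacePDF
        fun_prop
    have hf_nonneg : ∀ z, 0 ≤ f z := by
      intro z
      apply mul_nonneg (pow_nonneg (abs_nonneg _) k)
      unfold laplacePDF
      positivity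
    -- pointwise bound
    have hbound : ∀ z : ℝ, f z ≤ D * (A + |z|) ^ (2*k) * Real.exp (-(c * |z|)) * Real.exp (-(c * |z|)) := by
      intro z
      have h1 : |invEstimator b (q + z)| ≤ M * (1 + |q + z|) ^ 2 := abs_invEstimator_le b (q + z)
      have h2 : |invEstimator b (q + z)| ^ k ≤ (M * (1 + |q + z|) ^ 2) ^ k :=
        pow_le_pow_left₀ (abs_nonneg _) h1 k
      have h3 : (1 : ℝ) + |q + z| ≤ A + |z| := by
        have h := abs_add_le q z
        rw [abs_of_nonneg (by linarith : (0:ℝ) ≤ q)] at h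
        simp only [hA_def]
        linarith
      have h4 : (M * (1 + |q + z|) ^ 2) ^ k ≤ M ^ k * (A + |z|) ^ (2*k) := by
        rw [mul_pow, ← pow_mul, Nat.mul_comm 2 k]
        exact mul_le_mul_of_nonneg_left
          (pow_le_pow_left₀ (by positivity) h3 (k*2)) (by positivity)
      have h5 : Real.exp (-|z| / b) = Real.exp (-(c * |z|)) * Real.exp (-(c * |z|)) := by
        rw [← Real.exp_add]
        congr 1
        rw [hc_def]
        ring
      have hE : 0 < Real.exp (-(c * |z|)) := Real.exp_pos _
      calc f z = |invEstimator b (q + z)| ^ k * ((1/(2*b)) * (Real.exp (-(c * |z|)) * Real.exp (-(c * |z|)))) := by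
            show |invEstimator b (q + z)| ^ k * laplacePDF b z = _
            unfold laplacePDF; rw [h5]
        _ ≤ (M ^ k * (A + |z|) ^ (2*k)) * ((1/(2*b)) * (Real.exp (-(c * |z|)) * Real.exp (-(c * |z|)))) := by
            apply mul_le_mul_of_nonneg_right (h2.trans h4)
            positivity
        _ = D * (A + |z|) ^ (2*k) * Real.exp (-(c * |z|)) * Real.exp (-(c * |z|)) := by
            rw [hD_def]; ring
    have hkey : Filter.Tendsto (fun t : ℝ => D * (A + t) ^ (2*k) * Real.exp (-(c * t)))
        Filter.atTop (nhds 0) := by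
      have := (tendsto_aux A (2*k) hc).const_mul D
      rw [mul_zero] at this
      exact this.congr (fun t => by ring)
    -- big-O at atTop
    have hOtop : f =O[Filter.atTop] (fun z : ℝ => Real.exp (-(c * z))) := by
      rw [Asymptotics.isBigO_iff]
      refine ⟨1, ?_⟩
      filter_upwards [Filter.eventually_ge_atTop (0:ℝ),
        hkey.eventually_le_const one_pos] with z hz0 hz1
      rw [Real.norm_of_nonneg (hf_nonneg z), Real.norm_of_nonneg (Real.exp_pos _).le]
      have := hbound z
      rw [abs_of_nonneg hz0] at this
      calc f z ≤ D * (A + z) ^ (2*k) * Real.exp (-(c * z)) * Real.exp (-(c * z)) := this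
        _ ≤ 1 * Real.exp (-(c * z)) :=
            mul_le_mul_of_nonneg_right hz1 (Real.exp_pos _).le
    -- big-O at atBot
    have hObot : f =O[Filter.atBot] (fun z : ℝ => Real.exp (c * z)) := by
      rw [Asymptotics.isBigO_iff]
      refine ⟨1, ?_⟩
      have hkey2 : Filter.Tendsto (fun z : ℝ => D * (A + (-z)) ^ (2*k) * Real.exp (-(c * (-z))))
          Filter.atBot (nhds 0) := hkey.comp Filter.tendsto_neg_atBot_atTop
      filter_upwards [Filter.eventually_le_atBot (0:ℝ),
        hkey2.eventually_le_const one_pos] with z hz0 hz1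
      rw [Real.norm_of_nonneg (hf_nonneg z), Real.norm_of_nonneg (Real.exp_pos _).le]
      have hB := hbound z
      rw [abs_of_nonpos hz0] at hB
      have hEq : -(c * -z) = c * z := by ring
      rw [hEq] at hz1 hB
      calc f z ≤ D * (A + -z) ^ (2*k) * Real.exp (c * z) * Real.exp (c * z) := hB
        _ ≤ 1 * Real.exp (c * z) :=
            mul_le_mul_of_nonneg_right hz1 (Real.exp_pos _).le
    exact hf_cont.locallyIntegrable.integrable_of_isBigO_atBot_atTop
      hObot ⟨Set.Iic 0, Filter.Iic_mem_atBot 0, exp_integrableOn_Iic 0 hc⟩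
      hOtop ⟨Set.Ioi 0, Filter.Ioi_mem_atTop 0, by
        simpa using exp_neg_integrableOn_Ioi (0:ℝ) hc⟩
  · intro h
    have hII : IntervalIntegrable (fun z : ℝ => |1 / (q + z)| * laplacePDF b z)
        volume (-q - 1) (-q + 1) := h.intervalIntegrable
    have hne : (-q - 1 : ℝ) ≠ -q + 1 := by linarith
    have hc : (-q : ℝ) ∈ Set.uIcc (-q - 1) (-q + 1) := by
      rw [Set.mem_uIcc]
      left; constructor <;> linarith
    refine not_intervalIntegrable_of_sub_inv_isBigO_punctured ?_ hne hc hII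
    rw [Asymptotics.isBigO_iff]
    refine ⟨2 * b * Real.exp ((q + 1) / b), ?_⟩
    have hnb : ∀ᶠ x in nhds (-q), |x + q| < 1 := by
      have hball := Metric.ball_mem_nhds (-q : ℝ) one_pos
      filter_upwards [hball] with x hx
      rw [Metric.mem_ball, Real.dist_eq] at hx
      have : x - -q = x + q := by ring
      rwa [this] at hx
    filter_upwards [hnb.filter_mono nhdsWithin_le_nhds] with x hx
    have hxq : |x| ≤ q + 1 := by
      have : |x| ≤ |x + q| + |(-q : ℝ)| := by
        calc |x| = |x + q + -q| := by ring_nf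
          _ ≤ |x + q| + |(-q : ℝ)| := abs_add_le _ _
      rw [abs_neg, abs_of_nonneg (by linarith : (0:ℝ) ≤ q)] at this
      linarith
    have hpdf : (1 / (2 * b)) * Real.exp (-(q + 1) / b) ≤ laplacePDF b x := by
      unfold laplacePDF
      apply mul_le_mul_of_nonneg_left _ (by positivity)
      apply Real.exp_le_exp.mpr
      apply (div_le_div_iff_of_pos_right hb).mpr
      linarith [abs_nonneg x]
    rw [Real.norm_eq_abs, Real.norm_eq_abs]
    have hsub : x - -q = x + q := by ring
    rw [hsub]
    have h1q : |1 / (q + x)| = |(x + q)⁻¹| := by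
      rw [one_div, add_comm q x]
    have hRHS_nonneg : (0:ℝ) ≤ |1 / (q + x)| * laplacePDF b x := by
      apply mul_nonneg (abs_nonneg _)
      unfold laplacePDF; positivity
    rw [abs_of_nonneg hRHS_nonneg, h1q]
    have key : |(x + q)⁻¹| * 1 ≤ |(x + q)⁻¹| * ((2 * b * Real.exp ((q + 1) / b)) * laplacePDF b x) := by
      apply mul_le_mul_of_nonneg_left _ (abs_nonneg _)
      calc (1:ℝ) = (2 * b * Real.exp ((q + 1) / b)) * ((1 / (2 * b)) * Real.exp (-(q + 1) / b)) := by
            rw [neg_div, Real.exp_neg]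
            have hE : Real.exp ((q + 1) / b) ≠ 0 := Real.exp_ne_zero _
            field_simp
        _ ≤ (2 * b * Real.exp ((q + 1) / b)) * laplacePDF b x := by
            apply mul_le_mul_of_nonneg_left hpdf (by positivity)
    calc |(x + q)⁻¹| = |(x + q)⁻¹| * 1 := (mul_one _).symm
      _ ≤ |(x + q)⁻¹| * ((2 * b * Real.exp ((q + 1) / b)) * laplacePDF b x) := key
      _ = 2 * b * Real.exp ((q + 1) / b) * (|(x + q)⁻¹| * laplacePDF b x) := by ring
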